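/- Let R be a commutative ring, Λ a finite free Z_p-module (more generally a finite free module over a base ring B with R a B-algebra), ψ a perfect B-bilinear pairing exhibiting a dual lattice Λ̂, and K ⊆ Λ ⊗_B R a submodule such that the quotient T = (Λ ⊗_B R)/K is finitely generated projective over R. Define K^⊥ = { λ ∈ Λ̂ ⊗_B R : ψ_R(K, λ) = 0 }. Then there is a short exact sequence 0 → Hom_R(K, R) → Λ̂ ⊗_B R → K^⊥ → 0 of R-modules in which the surjection splits the inclusion K^⊥ ⊆ Λ̂ ⊗_B R; in particular K^⊥ is R-projective and its projective rank function is complementary to that of K. -/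

import Mathlib

open TensorProduct

section Aux

variable {R : Type*} [CommRing R]

/-- finrank of localized dual equals finrank of localized module, for f.g. projective `K`. -/
theorem aux_finrank_dual_localized (K : Type*) [AddCommGroup K] [Module R K]
    [Module.Finite R K] [Module.Projective R K] (p : Ideal R) [p.IsPrime] :
    Module.finrank (Localization p.primeCompl)
        (LocalizedModule p.primeCompl (K →ₗ[R] R))
      = Module.finrank (Localization p.primeCompl) (LocalizedModule p.primeCompl K) := by
  classical
  set S := p.primeCompl
  set A := Localization S
  haveI : Module.FinitePresentation R K := Module.finitePresentation_of_projective R K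
  let j : (K →ₗ[R] R) →ₗ[R] (LocalizedModule S K →ₗ[R] A) :=
    IsLocalizedModule.map S (LocalizedModule.mkLinearMap S K) (Algebra.linearMap R A)
  haveI : IsLocalizedModule S j := Module.FinitePresentation.isLocalizedModule_map S _ _
  let e1 : LocalizedModule S (K →ₗ[R] R) ≃ₗ[R] (LocalizedModule S K →ₗ[R] A) :=
    IsLocalizedModule.iso S j
  let e1' : LocalizedModule S (K →ₗ[R] R) ≃ₗ[A] (LocalizedModule S K →ₗ[R] A) :=
    LinearEquiv.ofBijective (e1.toLinearMap.extendScalarsOfIsLocalization S A) e1.bijective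
  let e2 : (LocalizedModule S K →ₗ[R] A) ≃ₗ[A] (LocalizedModule S K →ₗ[A] A) :=
    LinearMap.extendScalarsOfIsLocalizationEquiv S A
  haveI : Module.Free A (LocalizedModule S K) := Module.free_of_flat_of_isLocalRing
  let bK := Module.Free.chooseBasis A (LocalizedModule S K)
  rw [(e1'.trans e2).finrank_eq]
  exact (bK.toDualEquiv.finrank_eq).symm

end Aux

section Aux2

variable {R : Type*} [CommRing R] (S : Submonoid R)
variable {X D P : Type*} [AddCommGroup X] [Module R X] [AddCommGroup D] [Module R D]
  [AddCommGroup P] [Module R P]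

theorem aux_map_comp (g : X →ₗ[R] D) (h : D →ₗ[R] P) :
    LocalizedModule.map S (h ∘ₗ g) = (LocalizedModule.map S h).comp (LocalizedModule.map S g) := by
  ext x
  induction x using LocalizedModule.induction_on with
  | h m s => simp

theorem aux_map_zero : LocalizedModule.map S (0 : X →ₗ[R] D) = 0 := map_zero _

theorem aux_finrank_add [Module.Finite R D] [Module.Finite R P]
    [Module.Projective R D] [Module.Projective R P]
    {p : Ideal R} [p.IsPrime] (hS : S = p.primeCompl)
    (φ : X →ₗ[R] D) (s : X →ₗ[R] P) (i : D →ₗ[R] X) (inc : P →ₗ[R] X)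
    (h1 : φ ∘ₗ i = LinearMap.id) (h2 : s ∘ₗ inc = LinearMap.id)
    (h3 : φ ∘ₗ inc = 0) (h4 : s ∘ₗ i = 0)
    (h5 : i ∘ₗ φ + inc ∘ₗ s = LinearMap.id) :
    Module.finrank (Localization S) (LocalizedModule S X)
      = Module.finrank (Localization S) (LocalizedModule S D)
        + Module.finrank (Localization S) (LocalizedModule S P) := by
  classical
  let F : LocalizedModule S X →ₗ[Localization S] LocalizedModule S D × LocalizedModule S P :=
    (LocalizedModule.map S φ).prod (LocalizedModule.map S s)
  let G : LocalizedModule S D × LocalizedModule S P →ₗ[Localization S] LocalizedModule S X :=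
    (LocalizedModule.map S i) ∘ₗ LinearMap.fst (Localization S) _ _
      + (LocalizedModule.map S inc) ∘ₗ LinearMap.snd (Localization S) _ _
  have c1 : (LocalizedModule.map S φ) ∘ₗ (LocalizedModule.map S i) = LinearMap.id := by
    rw [← aux_map_comp, h1]
    ext x
    induction x using LocalizedModule.induction_on with
    | h m s => simp
  have c2 : (LocalizedModule.map S s) ∘ₗ (LocalizedModule.map S inc) = LinearMap.id := by
    rw [← aux_map_comp, h2]
    ext x
    induction x using LocalizedModule.induction_on with
    | h m s => simp
  have c3 : (LocalizedModule.map S φ) ∘ₗ (LocalizedModule.map S inc) = 0 := by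
    rw [← aux_map_comp, h3, aux_map_zero]
  have c4 : (LocalizedModule.map S s) ∘ₗ (LocalizedModule.map S i) = 0 := by
    rw [← aux_map_comp, h4, aux_map_zero]
  have c5 : (LocalizedModule.map S i) ∘ₗ (LocalizedModule.map S φ)
      + (LocalizedModule.map S inc) ∘ₗ (LocalizedModule.map S s) = LinearMap.id := by
    rw [← aux_map_comp, ← aux_map_comp, ← map_add, h5]
    ext x
    induction x using LocalizedModule.induction_on with
    | h m s => simp
  have hFG : F ∘ₗ G = LinearMap.id := by
    apply LinearMap.ext; intro x
    have e1 := LinearMap.congr_fun c1 x.1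
    have e2 := LinearMap.congr_fun c2 x.2
    have e3 := LinearMap.congr_fun c3 x.2
    have e4 := LinearMap.congr_fun c4 x.1
    simp only [LinearMap.comp_apply, LinearMap.id_apply, LinearMap.zero_apply] at e1 e2 e3 e4
    simp [F, G, Prod.ext_iff, e1, e2, e3, e4]
  have hGF : G ∘ₗ F = LinearMap.id := by
    apply LinearMap.ext; intro x
    have e5 := LinearMap.congr_fun c5 x
    simp only [LinearMap.add_apply, LinearMap.comp_apply, LinearMap.id_apply] at e5
    simpa [F, G] using e5
  let E : LocalizedModule S X ≃ₗ[Localization S] (LocalizedModule S D × LocalizedModule S P) :=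
    LinearEquiv.ofLinear F G hFG hGF
  haveI : Module.Finite (Localization S) (LocalizedModule S D) :=
    Module.Finite.of_isLocalizedModule S (LocalizedModule.mkLinearMap S D)
  haveI : Module.Finite (Localization S) (LocalizedModule S P) :=
    Module.Finite.of_isLocalizedModule S (LocalizedModule.mkLinearMap S P)
  haveI : IsLocalRing (Localization S) := by subst hS; infer_instance
  haveI : Module.FinitePresentation R D := Module.finitePresentation_of_projective R D
  haveI : Module.FinitePresentation R P := Module.finitePresentation_of_projective R P
  haveI : Module.Free (Localization S) (LocalizedModule S D) := Module.free_of_flat_of_isLocalRing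
  haveI : Module.Free (Localization S) (LocalizedModule S P) := Module.free_of_flat_of_isLocalRing
  rw [E.finrank_eq, Module.finrank_prod]

end Aux2

/-- Let `B` be a commutative base ring, `Λ`, `Λ̂` finite free `B`-modules with a perfect
`B`-bilinear pairing `ψ : Λ × Λ̂ → B`, `R` a commutative `B`-algebra, and
`K ⊆ Λ ⊗_B R` a submodule whose quotient is projective over `R`.  Let `pr` denote the
base change of `ψ` to `R` and `K^⊥ = {λ ∈ Λ̂ ⊗_B R : ψ_R(K, λ) = 0}`.  Then there is a
short exact sequence `0 → Hom_R(K, R) → Λ̂ ⊗_B R → K^⊥ → 0` in which the surjection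
splits the inclusion `K^⊥ ⊆ Λ̂ ⊗_B R`; in particular `K^⊥` is `R`-projective and its
projective rank function is complementary to that of `K`. -/
theorem stmt8 (B R Λ Λh : Type*) [CommRing B] [CommRing R] [Algebra B R]
    [AddCommGroup Λ] [Module B Λ] [Module.Finite B Λ] [Module.Free B Λ]
    [AddCommGroup Λh] [Module B Λh] [Module.Finite B Λh] [Module.Free B Λh]
    (ψ : Λ →ₗ[B] Λh →ₗ[B] B)
    (hperf₁ : Function.Bijective ψ)
    (hperf₂ : Function.Bijective ψ.flip)
    (K : Submodule R (R ⊗[B] Λ))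
    (hT : Module.Projective R ((R ⊗[B] Λ) ⧸ K))
    (pr : (R ⊗[B] Λ) →ₗ[R] (R ⊗[B] Λh) →ₗ[R] R)
    (hpr : ∀ (r r' : R) (x : Λ) (y : Λh),
      pr (r ⊗ₜ x) (r' ⊗ₜ y) = r * r' * algebraMap B R (ψ x y)) :
    let Kperp : Submodule R (R ⊗[B] Λh) := ⨅ x : K, LinearMap.ker (pr ↑x)
    ∃ (ι : (↥K →ₗ[R] R) →ₗ[R] (R ⊗[B] Λh))
      (s : (R ⊗[B] Λh) →ₗ[R] ↥Kperp),
      Function.Injective ι ∧ Function.Surjective s ∧ Function.Exact ι s ∧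
      (∀ y : ↥Kperp, s ↑y = y) ∧
      Module.Projective R ↥Kperp ∧
      (∀ (p : Ideal R) [p.IsPrime],
        Module.finrank (Localization p.primeCompl) (LocalizedModule p.primeCompl ↥K)
          + Module.finrank (Localization p.primeCompl)
              (LocalizedModule p.primeCompl ↥Kperp)
          = Module.finrank (Localization p.primeCompl)
              (LocalizedModule p.primeCompl (R ⊗[B] Λh))) := by
  classical
  intro Kperp
  have hKperp_def : Kperp = ⨅ x : K, LinearMap.ker (pr ↑x) := rfl
  -- a basis of Λ and the dual-compatible basis of Λh
  let b := Module.Free.chooseBasis B Λ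
  let ψe : Λh ≃ₗ[B] Module.Dual B Λ := LinearEquiv.ofBijective ψ.flip hperf₂
  let bh : Module.Basis (Module.Free.ChooseBasisIndex B Λ) B Λh := b.dualBasis.map ψe.symm
  have hψ : ∀ i j, ψ (b i) (bh j) = if i = j then 1 else 0 := by
    intro i j
    have h1 : ψ.flip (bh j) = b.dualBasis j := by
      show ψe (ψe.symm (b.dualBasis j)) = b.dualBasis j
      exact ψe.apply_symm_apply _
    calc ψ (b i) (bh j) = ψ.flip (bh j) (b i) := rfl
    _ = b.dualBasis j (b i) := by rw [h1]
    _ = if i = j then 1 else 0 := by rw [Module.Basis.dualBasis_apply_self]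
  -- bases of the base-changed modules
  let bM : Module.Basis _ R (R ⊗[B] Λ) := Algebra.TensorProduct.basis R b
  let bN : Module.Basis _ R (R ⊗[B] Λh) := Algebra.TensorProduct.basis R bh
  have hprb : ∀ i j, pr (bM i) (bN j) = if i = j then 1 else 0 := by
    intro i j
    have : pr ((1:R) ⊗ₜ b i) ((1:R) ⊗ₜ bh j) = 1 * 1 * algebraMap B R (ψ (b i) (bh j)) :=
      hpr 1 1 (b i) (bh j)
    rw [show bM i = (1:R) ⊗ₜ[B] b i from Algebra.TensorProduct.basis_apply b i,
      show bN j = (1:R) ⊗ₜ[B] bh j from Algebra.TensorProduct.basis_apply bh j, this,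
      hψ i j, one_mul, one_mul, apply_ite (algebraMap B R), map_one, map_zero]
  -- perfectness of the base-changed pairing
  have hflip : pr.flip = (bN.equiv bM.dualBasis (Equiv.refl _)).toLinearMap := by
    refine bN.ext fun j => ?_
    refine bM.ext fun i => ?_
    have h2 : (bN.equiv bM.dualBasis (Equiv.refl _)) (bN j) = bM.dualBasis j :=
      bN.equiv_apply _ _ _
    show pr (bM i) (bN j) = (bN.equiv bM.dualBasis (Equiv.refl _)) (bN j) (bM i)
    rw [h2, hprb, Module.Basis.dualBasis_apply_self]
  have hbij : Function.Bijective pr.flip := by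
    rw [hflip]; exact (bN.equiv bM.dualBasis (Equiv.refl _)).bijective
  let e : (R ⊗[B] Λh) ≃ₗ[R] Module.Dual R (R ⊗[B] Λ) := LinearEquiv.ofBijective pr.flip hbij
  -- splitting of K in R ⊗ Λ
  haveI := hT
  obtain ⟨g, hg⟩ := Module.projective_lifting_property K.mkQ LinearMap.id K.mkQ_surjective
  have hmem : ∀ x : R ⊗[B] Λ, x - g (K.mkQ x) ∈ K := by
    intro x
    have h2 : K.mkQ (g (K.mkQ x)) = K.mkQ x := LinearMap.congr_fun hg (K.mkQ x)
    have h : K.mkQ (x - g (K.mkQ x)) = 0 := by rw [map_sub, h2, sub_self]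
    rwa [Submodule.mkQ_apply, Submodule.Quotient.mk_eq_zero] at h
  let π : (R ⊗[B] Λ) →ₗ[R] K := (LinearMap.id - g ∘ₗ K.mkQ).codRestrict K hmem
  have hπ : ∀ k : K, π (k : R ⊗[B] Λ) = k := by
    intro k
    apply Subtype.ext
    show (k : R ⊗[B] Λ) - g (K.mkQ k) = k
    have : K.mkQ (k : R ⊗[B] Λ) = 0 := by
      rw [Submodule.mkQ_apply, Submodule.Quotient.mk_eq_zero]; exact k.2
    rw [this, map_zero, sub_zero]
  -- the maps of the short exact sequence
  let φ : (R ⊗[B] Λh) →ₗ[R] (↥K →ₗ[R] R) := K.subtype.dualMap ∘ₗ pr.flip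
  let ι : (↥K →ₗ[R] R) →ₗ[R] (R ⊗[B] Λh) := e.symm.toLinearMap ∘ₗ π.dualMap
  have hφι : ∀ f, φ (ι f) = f := by
    intro f
    show K.subtype.dualMap (pr.flip (e.symm (π.dualMap f))) = f
    have h1 : pr.flip (e.symm (π.dualMap f)) = π.dualMap f := e.apply_symm_apply _
    rw [h1]
    apply LinearMap.ext; intro k
    show f (π ((K.subtype) k)) = f k
    exact congrArg f (hπ k)
  have hKer : ∀ x, x ∈ Kperp ↔ φ x = 0 := by
    intro x
    rw [hKperp_def, Submodule.mem_iInf]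
    constructor
    · intro h; apply LinearMap.ext; intro k; exact h k
    · intro h k; exact LinearMap.congr_fun h k
  have hmem2 : ∀ x, x - ι (φ x) ∈ Kperp := by
    intro x
    apply (hKer _).mpr
    rw [map_sub, hφι, sub_self]
  let s : (R ⊗[B] Λh) →ₗ[R] ↥Kperp := (LinearMap.id - ι ∘ₗ φ).codRestrict Kperp hmem2
  have hret : ∀ y : ↥Kperp, s (y : R ⊗[B] Λh) = y := by
    intro y
    apply Subtype.ext
    show (y : R ⊗[B] Λh) - ι (φ y) = y
    rw [(hKer _).mp y.2, map_zero, sub_zero]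
  have hιinj : Function.Injective ι := by
    intro f f' h
    have := congrArg φ h
    rwa [hφι, hφι] at this
  have hssurj : Function.Surjective s := fun y => ⟨y, hret y⟩
  have hexact : Function.Exact ι s := by
    intro x
    constructor
    · intro hx
      have : (x : R ⊗[B] Λh) - ι (φ x) = 0 := congrArg Subtype.val hx
      exact ⟨φ x, by rw [← sub_eq_zero]; exact (neg_eq_zero.mp (by rw [neg_sub]; exact this))⟩
    · rintro ⟨f, rfl⟩
      apply Subtype.ext
      show ι f - ι (φ (ι f)) = 0
      rw [hφι, sub_self]
  haveI : Module.Free R (R ⊗[B] Λh) := Module.Free.of_basis bN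
  have hproj : Module.Projective R ↥Kperp :=
    Module.Projective.of_split Kperp.subtype s (LinearMap.ext fun y => hret y)
  refine ⟨ι, s, hιinj, hssurj, hexact, hret, hproj, ?_⟩
  intro p hp
  -- instances for the rank computation
  haveI : Module.Finite R (R ⊗[B] Λ) := Module.Finite.of_basis bM
  haveI : Module.Finite R (R ⊗[B] Λh) := Module.Finite.of_basis bN
  have hπs : Function.Surjective π := fun k => ⟨k, hπ k⟩
  haveI : Module.Finite R ↥K := Module.Finite.of_surjective π hπs
  haveI : Module.Projective R ↥K :=
    Module.Projective.of_split K.subtype π (LinearMap.ext fun k => hπ k)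
  haveI : Module.Finite R (↥K →ₗ[R] R) :=
    Module.Finite.of_surjective φ (fun f => ⟨ι f, hφι f⟩)
  haveI : Module.Projective R (↥K →ₗ[R] R) :=
    Module.Projective.of_split ι φ (LinearMap.ext fun f => hφι f)
  haveI : Module.Finite R ↥Kperp := Module.Finite.of_surjective s hssurj
  haveI : Module.Projective R ↥Kperp := hproj
  have H1 : φ ∘ₗ ι = LinearMap.id := LinearMap.ext fun f => hφι f
  have H2 : s ∘ₗ Kperp.subtype = LinearMap.id := LinearMap.ext fun y => hret y
  have H3 : φ ∘ₗ Kperp.subtype = 0 := LinearMap.ext fun y => (hKer _).mp y.2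
  have H4 : s ∘ₗ ι = 0 := by
    apply LinearMap.ext; intro f
    apply Subtype.ext
    show ι f - ι (φ (ι f)) = 0
    rw [hφι, sub_self]
  have H5 : ι ∘ₗ φ + Kperp.subtype ∘ₗ s = LinearMap.id := by
    apply LinearMap.ext; intro x
    show ι (φ x) + (x - ι (φ x)) = x
    abel
  rw [aux_finrank_dual_localized (R := R) ↥K p |>.symm]
  exact (aux_finrank_add p.primeCompl (X := R ⊗[B] Λh) (D := ↥K →ₗ[R] R) (P := ↥Kperp) (p := p) rfl φ s ι Kperp.subtype H1 H2 H3 H4 H5).symm
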